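/- Let M be a popular matching in a bipartite graph G with strict preferences such that there is no augmenting path with respect to M in the subgraph G_M. Then M is dominant: for every matching M' with |M'| > |M|, M is more popular than M'. -/

import Mathlib

open Classical

/-- A bipartite graph `G = (A ∪ B, E)` with strict preference lists:
`adj` is the edge relation, and each vertex ranks its neighbors by a rank
function (lower rank = more preferred), injective on neighbors. -/
structure PrefSys (A B : Type) where
  adj : A → B → Prop
  rankA : A → B → ℕ
  rankB : B → A → ℕ
  rankA_inj : ∀ a b b', adj a b → adj a b' → rankA a b = rankA a b' → b = b'
  rankB_inj : ∀ b a a', adj a b → adj a' b → rankB b a = rankB b a' → a = a'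

namespace PrefSys

variable {A B : Type} (P : PrefSys A B)

/-- `M` is a matching of `G`: a set of edges, no two sharing a vertex. -/
def IsMatching (M : Finset (A × B)) : Prop :=
  (∀ p ∈ M, P.adj p.1 p.2) ∧
  (∀ p ∈ M, ∀ q ∈ M, p.1 = q.1 → p = q) ∧
  (∀ p ∈ M, ∀ q ∈ M, p.2 = q.2 → p = q)

/-- Vertex `a ∈ A` prefers matching `M` to matching `M'`:
`a` is matched in `M` and either unmatched in `M'` or matched to a strictly
worse partner in `M'`. -/
def prefA (M M' : Finset (A × B)) (a : A) : Prop :=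
  ∃ b, (a, b) ∈ M ∧ ∀ b', (a, b') ∈ M' → P.rankA a b < P.rankA a b'

/-- Vertex `b ∈ B` prefers matching `M` to matching `M'`. -/
def prefB (M M' : Finset (A × B)) (b : B) : Prop :=
  ∃ a, (a, b) ∈ M ∧ ∀ a', (a', b) ∈ M' → P.rankB b a < P.rankB b a'

/-- `φ(M, M')`: the number of vertices preferring `M` to `M'`. -/
noncomputable def phi (M M' : Finset (A × B)) : ℕ :=
  Nat.card {a : A // P.prefA M M' a} + Nat.card {b : B // P.prefB M M' b}

/-- A matching is popular if it never loses a head-to-head election. -/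
def Popular (M : Finset (A × B)) : Prop :=
  P.IsMatching M ∧ ∀ M', P.IsMatching M' → P.phi M' M ≤ P.phi M M'

/-- `a`'s vote on the edge `(a,b)` versus its `M`-partner is `+`. -/
def voteAplus (M : Finset (A × B)) (a : A) (b : B) : Prop :=
  ∀ b', (a, b') ∈ M → P.rankA a b < P.rankA a b'

/-- `b`'s vote on the edge `(a,b)` versus its `M`-partner is `+`. -/
def voteBplus (M : Finset (A × B)) (a : A) (b : B) : Prop :=
  ∀ a', (a', b) ∈ M → P.rankB b a < P.rankB b a'

/-- `(a,b)` is a blocking edge (an edge outside `M` labeled `(+,+)`). -/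
def Blocking (M : Finset (A × B)) (a : A) (b : B) : Prop :=
  P.adj a b ∧ (a, b) ∉ M ∧ P.voteAplus M a b ∧ P.voteBplus M a b

/-- A stable matching: a matching with no blocking edge. -/
def Stable (M : Finset (A × B)) : Prop :=
  P.IsMatching M ∧ ∀ a b, ¬ P.Blocking M a b

/-- A dominant matching: popular, and more popular than every larger matching. -/
def Dominant (M : Finset (A × B)) : Prop :=
  P.Popular M ∧ ∀ M', P.IsMatching M' → M.card < M'.card → P.phi M' M < P.phi M M'

/-- The edge `(a,b)` survives in the subgraph `G_M` (i.e. it is an edge of `G`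
that is in `M` or is not labeled `(-,-)`). -/
def inGM (M : Finset (A × B)) (a : A) (b : B) : Prop :=
  P.adj a b ∧ ((a, b) ∈ M ∨ P.voteAplus M a b ∨ P.voteBplus M a b)

end PrefSys

namespace PrefSys

variable {A B : Type} (P : PrefSys A B)

/-- Vertices of `G`, as a sum type. -/
abbrev V (A B : Type) := Sum A B

/-- Adjacency in the subgraph `G_M` (symmetrized). -/
def vAdjGM (M : Finset (A × B)) : V A B → V A B → Prop
  | .inl a, .inr b => P.inGM M a b
  | .inr b, .inl a => P.inGM M a b
  | _, _ => False

/-- The (unordered) pair `{x,y}` is an edge of the matching `M`. -/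
def vInM (M : Finset (A × B)) : V A B → V A B → Prop
  | .inl a, .inr b => (a, b) ∈ M
  | .inr b, .inl a => (a, b) ∈ M
  | _, _ => False

/-- The (unordered) pair `{x,y}` is an edge labeled `(+,+)` wrt `M`. -/
def vPlusPlus (M : Finset (A × B)) : V A B → V A B → Prop
  | .inl a, .inr b => P.Blocking M a b
  | .inr b, .inl a => P.Blocking M a b
  | _, _ => False

/-- The vertex `x` is matched in `M`. -/
def vMatched (M : Finset (A × B)) : V A B → Prop
  | .inl a => ∃ b, (a, b) ∈ M
  | .inr b => ∃ a, (a, b) ∈ M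

/-- The list of consecutive pairs of a vertex list. -/
def edgesOf (v : List (V A B)) : List (V A B × V A B) := v.zip v.tail

/-- An alternating path with respect to `M` in the subgraph `G_M`:
a list of distinct vertices, consecutive ones adjacent in `G_M`, whose edges
alternate between matching and non-matching edges. -/
def IsAltPath (M : Finset (A × B)) (v : List (V A B)) : Prop :=
  v.Nodup ∧ v.Chain' (P.vAdjGM M) ∧
  (edgesOf v).Chain' (fun e f => vInM M e.1 e.2 ↔ ¬ vInM M f.1 f.2)

/-- An augmenting path with respect to `M` in `G_M`: an alternating path with
at least one edge, both of whose endpoints are unmatched in `M`. -/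
def IsAugPath (M : Finset (A × B)) (v : List (V A B)) : Prop :=
  P.IsAltPath M v ∧ 2 ≤ v.length ∧
  (∀ x, v.head? = some x → ¬ vMatched M x) ∧
  (∀ x, v.getLast? = some x → ¬ vMatched M x)

/-- The edges of a cycle given by a vertex list (consecutive pairs plus the
closing edge from the last vertex to the first). -/
def cycEdgesOf (v : List (V A B)) : List (V A B × V A B) :=
  match v.head?, v.getLast? with
  | some x, some y => edgesOf v ++ [(y, x)]
  | _, _ => []

/-- An alternating cycle with respect to `M` in the subgraph `G_M`. -/
def IsAltCycle (M : Finset (A × B)) (v : List (V A B)) : Prop :=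
  v.Nodup ∧ 4 ≤ v.length ∧
  (∀ e ∈ cycEdgesOf v, P.vAdjGM M e.1 e.2) ∧
  (cycEdgesOf v).Chain' (fun e f => vInM M e.1 e.2 ↔ ¬ vInM M f.1 f.2)

/-- The set of `G`-edges (as pairs in `A × B`) used by a list of vertex pairs. -/
noncomputable def edgeFinset (l : List (V A B × V A B)) : Finset (A × B) :=
  (l.filterMap (fun e => match e with
    | (.inl a, .inr b) => some (a, b)
    | (.inr b, .inl a) => some (a, b)
    | _ => none)).toFinset

/-- `M ⊕ ρ`: switch `M` along the path with vertex list `v`. -/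
noncomputable def augment (M : Finset (A × B)) (v : List (V A B)) : Finset (A × B) :=
  symmDiff M (edgeFinset (edgesOf v))

end PrefSys

namespace AuxDom

open PrefSys

variable {A B : Type}

abbrev VV (A B : Type) := PrefSys.V A B

lemma vInM_symm {M : Finset (A × B)} {x y : V A B} (h : vInM M x y) : vInM M y x := by
  cases x <;> cases y <;> simp_all [vInM]

lemma vInM_cases {M : Finset (A × B)} {x y : V A B} (h : vInM M x y) :
    ∃ a b, (a, b) ∈ M ∧ ((x = Sum.inl a ∧ y = Sum.inr b) ∨ (x = Sum.inr b ∧ y = Sum.inl a)) := by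
  cases x with
  | inl a => cases y with
    | inl a' => exact absurd h (by simp [vInM])
    | inr b => exact ⟨a, b, h, Or.inl ⟨rfl, rfl⟩⟩
  | inr b => cases y with
    | inl a => exact ⟨a, b, h, Or.inr ⟨rfl, rfl⟩⟩
    | inr b' => exact absurd h (by simp [vInM])

lemma vInM_ne {M : Finset (A × B)} {x y : V A B} (h : vInM M x y) : x ≠ y := by
  rcases vInM_cases h with ⟨a, b, -, h | h⟩ <;> rw [h.1, h.2] <;> simp

lemma vInM_mono {M N : Finset (A × B)} (hMN : M ⊆ N) {x y : V A B} (h : vInM M x y) :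
    vInM N x y := by
  cases x <;> cases y <;> simp_all [vInM] <;> exact hMN h

lemma vInM_sdiff_left {M N : Finset (A × B)} {x y : V A B} (h : vInM (M \ N) x y) :
    vInM M x y := by
  cases x <;> cases y <;> simp_all [vInM]

lemma vInM_sdiff_right {M N : Finset (A × B)} {x y : V A B} (h : vInM (M \ N) x y) :
    ¬ vInM N x y := by
  cases x <;> cases y <;> simp_all [vInM]

variable {P : PrefSys A B}

lemma vInM_unique {M : Finset (A × B)} (hM : P.IsMatching M) {x y z : V A B}
    (hy : vInM M x y) (hz : vInM M x z) : y = z := by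
  cases x with
  | inl a =>
    cases y with
    | inl a' => exact absurd hy (by simp [vInM])
    | inr b =>
      cases z with
      | inl a' => exact absurd hz (by simp [vInM])
      | inr b' =>
        have := hM.2.1 _ hy _ hz rfl
        simp only [Prod.mk.injEq] at this
        rw [this.2]
  | inr b =>
    cases y with
    | inr b' => exact absurd hy (by simp [vInM])
    | inl a =>
      cases z with
      | inr b' => exact absurd hz (by simp [vInM])
      | inl a' =>
        have := hM.2.2 _ hy _ hz rfl
        simp only [Prod.mk.injEq] at this
        rw [this.1]

/-- whether `v` prefers `N` to `M`. -/
def prefV (P : PrefSys A B) (N M : Finset (A × B)) (v : V A B) : Prop :=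
  Sum.elim (P.prefA N M) (P.prefB N M) v

lemma prefV_exclusive {N M : Finset (A × B)} {v : V A B}
    (h1 : prefV P N M v) (h2 : prefV P M N v) : False := by
  cases v with
  | inl a =>
    obtain ⟨b, hb, hball⟩ := h1
    obtain ⟨b', hb', hball'⟩ := h2
    exact absurd (hball b' hb') (by simpa using not_lt.2 (hball' b hb).le)
  | inr b =>
    obtain ⟨a, ha, hall⟩ := h1
    obtain ⟨a', ha', hall'⟩ := h2
    exact absurd (hall a' ha') (by simpa using not_lt.2 (hall' a ha).le)

/-- the vote of vertex `v` comparing `N` (first) against `M`. -/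
noncomputable def vote (P : PrefSys A B) (N M : Finset (A × B)) (v : V A B) : ℤ :=
  if prefV P N M v then 1 else if prefV P M N v then -1 else 0

lemma vote_values (N M : Finset (A × B)) (v : V A B) :
    vote P N M v = 1 ∨ vote P N M v = -1 ∨ vote P N M v = 0 := by
  unfold vote; split_ifs <;> simp

lemma vote_eq_one_iff {N M : Finset (A × B)} {v : V A B} :
    vote P N M v = 1 ↔ prefV P N M v := by
  unfold vote
  split_ifs with h1 h2
  · simp [h1]
  · exact ⟨fun h => absurd h (by norm_num), fun h => absurd h h1⟩
  · exact ⟨fun h => absurd h (by norm_num), fun h => absurd h h1⟩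

lemma vote_eq_neg_one_iff {N M : Finset (A × B)} {v : V A B} :
    vote P N M v = -1 ↔ prefV P M N v := by
  unfold vote
  split_ifs with h1 h2
  · simp only [show (1 : ℤ) ≠ -1 by norm_num, false_iff]
    exact fun hc => prefV_exclusive h1 hc
  · simp [h2]
  · simp [h2]

lemma phi_eq [Fintype A] [Fintype B] (N M : Finset (A × B)) :
    (P.phi N M : ℤ) =
      (∑ a : A, if P.prefA N M a then (1 : ℤ) else 0) +
      (∑ b : B, if P.prefB N M b then (1 : ℤ) else 0) := by
  classical
  have hA : Nat.card {a : A // P.prefA N M a} = (Finset.univ.filter (P.prefA N M)).card := by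
    rw [Nat.card_eq_fintype_card, Fintype.card_subtype]
  have hB : Nat.card {b : B // P.prefB N M b} = (Finset.univ.filter (P.prefB N M)).card := by
    rw [Nat.card_eq_fintype_card, Fintype.card_subtype]
  rw [PrefSys.phi, hA, hB]
  push_cast
  rw [← Finset.sum_boole, ← Finset.sum_boole]

end AuxDom

namespace AuxDom

open PrefSys

variable {A B : Type} {P : PrefSys A B}

lemma vote_split (N M : Finset (A × B)) (v : V A B) :
    vote P N M v = (if prefV P N M v then (1 : ℤ) else 0)
      - (if prefV P M N v then (1 : ℤ) else 0) := by
  unfold vote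
  split_ifs with h1 h2
  · exact absurd (prefV_exclusive h1 h2) (fun h => h)
  · norm_num
  · norm_num
  · norm_num

lemma phi_sub [Fintype A] [Fintype B] (N M : Finset (A × B)) :
    (P.phi N M : ℤ) - (P.phi M N : ℤ) = ∑ v : V A B, vote P N M v := by
  have hsum : ∀ (N' M' : Finset (A × B)),
      (∑ v : V A B, if prefV P N' M' v then (1 : ℤ) else 0) =
      (∑ a : A, if P.prefA N' M' a then (1 : ℤ) else 0) +
      (∑ b : B, if P.prefB N' M' b then (1 : ℤ) else 0) := by
    intro N' M'
    rw [Fintype.sum_sum_type]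
    rfl
  calc (P.phi N M : ℤ) - (P.phi M N : ℤ)
      = (∑ v : V A B, if prefV P N M v then (1 : ℤ) else 0)
        - (∑ v : V A B, if prefV P M N v then (1 : ℤ) else 0) := by
        rw [phi_eq, phi_eq, hsum, hsum]
    _ = ∑ v : V A B, ((if prefV P N M v then (1 : ℤ) else 0)
        - (if prefV P M N v then (1 : ℤ) else 0)) := by
        rw [Finset.sum_sub_distrib]
    _ = ∑ v : V A B, vote P N M v := by
        exact Finset.sum_congr rfl fun v _ => (vote_split N M v).symm

lemma prefV_congr_left {N1 N2 M : Finset (A × B)} {v : V A B}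
    (h : ∀ y, vInM N1 v y ↔ vInM N2 v y) : prefV P N1 M v ↔ prefV P N2 M v := by
  cases v with
  | inl a =>
    have h' : ∀ b, ((a, b) ∈ N1 ↔ (a, b) ∈ N2) := fun b => h (Sum.inr b)
    exact exists_congr fun b => and_congr (h' b) Iff.rfl
  | inr b =>
    have h' : ∀ a, ((a, b) ∈ N1 ↔ (a, b) ∈ N2) := fun a => h (Sum.inl a)
    exact exists_congr fun a => and_congr (h' a) Iff.rfl

lemma prefV_congr_right {N1 N2 M : Finset (A × B)} {v : V A B}
    (h : ∀ y, vInM N1 v y ↔ vInM N2 v y) : prefV P M N1 v ↔ prefV P M N2 v := by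
  cases v with
  | inl a =>
    have h' : ∀ b, ((a, b) ∈ N1 ↔ (a, b) ∈ N2) := fun b => h (Sum.inr b)
    exact exists_congr fun b => and_congr Iff.rfl
      (forall_congr' fun b' => imp_congr (h' b') Iff.rfl)
  | inr b =>
    have h' : ∀ a, ((a, b) ∈ N1 ↔ (a, b) ∈ N2) := fun a => h (Sum.inl a)
    exact exists_congr fun a => and_congr Iff.rfl
      (forall_congr' fun a' => imp_congr (h' a') Iff.rfl)

lemma vote_congr {N1 N2 M : Finset (A × B)} {v : V A B}
    (h : ∀ y, vInM N1 v y ↔ vInM N2 v y) : vote P N1 M v = vote P N2 M v := by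
  have e1 : prefV P N1 M v ↔ prefV P N2 M v := prefV_congr_left h
  have e2 : prefV P M N1 v ↔ prefV P M N2 v := prefV_congr_right h
  simp only [vote, e1, e2]

lemma prefV_self (M : Finset (A × B)) (v : V A B) : ¬ prefV P M M v := by
  cases v with
  | inl a => rintro ⟨b, hb, hball⟩; exact lt_irrefl _ (hball b hb)
  | inr b => rintro ⟨a, ha, hall⟩; exact lt_irrefl _ (hall a ha)

lemma vote_self (M : Finset (A × B)) (v : V A B) : vote P M M v = 0 := by
  simp [vote, prefV_self]

lemma vote_zero_of_same {N M : Finset (A × B)} {v : V A B}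
    (h : ∀ y, vInM N v y ↔ vInM M v y) : vote P N M v = 0 := by
  rw [vote_congr h, vote_self]

lemma prefV_of_witness {N M : Finset (A × B)} {v y : V A B}
    (hin : vInM N v y) (hum : ∀ z, ¬ vInM M v z) : prefV P N M v := by
  rcases vInM_cases hin with ⟨a, b, hab, ⟨h1, h2⟩ | ⟨h1, h2⟩⟩ <;> subst h1
  · exact ⟨b, hab, fun b' hb' => absurd (show vInM M (Sum.inl a) (Sum.inr b') from hb')
      (hum (Sum.inr b'))⟩
  · exact ⟨a, hab, fun a' ha' => absurd (show vInM M (Sum.inr b) (Sum.inl a') from ha')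
      (hum (Sum.inl a'))⟩

lemma prefV_not_of_unmatched {N M : Finset (A × B)} {v : V A B}
    (hum : ∀ z, ¬ vInM N v z) : ¬ prefV P N M v := by
  cases v with
  | inl a => rintro ⟨b, hb, -⟩; exact hum (Sum.inr b) hb
  | inr b => rintro ⟨a, ha, -⟩; exact hum (Sum.inl a) ha

lemma vote_neg_one_unmatched {N M : Finset (A × B)} {v z : V A B}
    (h : ∀ y, ¬ vInM N v y) (hm : vInM M v z) : vote P N M v = -1 := by
  rw [vote_eq_neg_one_iff]
  exact prefV_of_witness hm h

lemma vote_zero_both_unmatched {N M : Finset (A × B)} {v : V A B}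
    (h1 : ∀ y, ¬ vInM N v y) (h2 : ∀ y, ¬ vInM M v y) : vote P N M v = 0 := by
  simp [vote, prefV_not_of_unmatched h1, prefV_not_of_unmatched h2]

/-- `v`'s vote on the (v,y) edge versus its `M`-partner is `+`. -/
def vPlus (P : PrefSys A B) (M : Finset (A × B)) : V A B → V A B → Prop
  | .inl a, .inr b => P.voteAplus M a b
  | .inr b, .inl a => P.voteBplus M a b
  | _, _ => False

lemma vote_one_iff_plus {N M : Finset (A × B)} {v y : V A B}
    (hN : P.IsMatching N) (hin : vInM N v y) :
    vote P N M v = 1 ↔ vPlus P M v y := by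
  rw [vote_eq_one_iff]
  rcases vInM_cases hin with ⟨a, b, hab, ⟨h1, h2⟩ | ⟨h1, h2⟩⟩ <;> subst h1 <;> subst h2
  · show P.prefA N M a ↔ P.voteAplus M a b
    constructor
    · rintro ⟨b0, hb0, hall⟩
      have : b0 = b := by
        have := hN.2.1 _ hb0 _ hab rfl
        simpa using this
      subst this; exact hall
    · intro hplus; exact ⟨b, hab, hplus⟩
  · show P.prefB N M b ↔ P.voteBplus M a b
    constructor
    · rintro ⟨a0, ha0, hall⟩
      have : a0 = a := by
        have := hN.2.2 _ ha0 _ hab rfl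
        simpa using this
      subst this; exact hall
    · intro hplus; exact ⟨a, hab, hplus⟩

lemma vote_ne_zero {N M : Finset (A × B)} {v y : V A B}
    (hMm : P.IsMatching M) (hNm : P.IsMatching N)
    (hin : vInM N v y) (hnotM : ¬ vInM M v y) :
    vote P N M v = 1 ∨ vote P N M v = -1 := by
  by_cases hm : ∃ z, vInM M v z
  · obtain ⟨z, hz⟩ := hm
    rcases vInM_cases hin with ⟨a, b, hab, ⟨h1, h2⟩ | ⟨h1, h2⟩⟩ <;> subst h1 <;> subst h2
    · -- v = inl a, y = inr b
      cases z with
      | inl a' => exact absurd hz (by simp [vInM])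
      | inr b' =>
        have hb' : (a, b') ∈ M := hz
        have hne : b ≠ b' := fun h => hnotM (h ▸ hb' : (a, b) ∈ M)
        have hadj1 : P.adj a b := hNm.1 _ hab
        have hadj2 : P.adj a b' := hMm.1 _ hb'
        have hrne : P.rankA a b ≠ P.rankA a b' :=
          fun h => hne (P.rankA_inj a b b' hadj1 hadj2 h)
        rcases lt_or_gt_of_ne hrne with hlt | hgt
        · left; rw [vote_eq_one_iff]
          exact ⟨b, hab, fun b'' hb'' => by
            have : b'' = b' := by simpa using (hMm.2.1 _ hb'' _ hb' rfl)
            rwa [this]⟩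
        · right; rw [vote_eq_neg_one_iff]
          exact ⟨b', hb', fun b'' hb'' => by
            have : b'' = b := by simpa using (hNm.2.1 _ hb'' _ hab rfl)
            rwa [this]⟩
    · -- v = inr b, y = inl a
      cases z with
      | inr b' => exact absurd hz (by simp [vInM])
      | inl a' =>
        have ha' : (a', b) ∈ M := hz
        have hne : a ≠ a' := fun h => hnotM (h ▸ ha' : (a, b) ∈ M)
        have hadj1 : P.adj a b := hNm.1 _ hab
        have hadj2 : P.adj a' b := hMm.1 _ ha'
        have hrne : P.rankB b a ≠ P.rankB b a' :=
          fun h => hne (P.rankB_inj b a a' hadj1 hadj2 h)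
        rcases lt_or_gt_of_ne hrne with hlt | hgt
        · left; rw [vote_eq_one_iff]
          exact ⟨a, hab, fun a'' ha'' => by
            have : a'' = a' := by simpa using (hMm.2.2 _ ha'' _ ha' rfl)
            rwa [this]⟩
        · right; rw [vote_eq_neg_one_iff]
          exact ⟨a', ha', fun a'' ha'' => by
            have : a'' = a := by simpa using (hNm.2.2 _ ha'' _ hab rfl)
            rwa [this]⟩
  · push_neg at hm
    left; rw [vote_eq_one_iff]
    exact prefV_of_witness hin hm

lemma vMatched_iff {M : Finset (A × B)} {x : V A B} :
    vMatched M x ↔ ∃ y, vInM M x y := by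
  cases x with
  | inl a =>
    constructor
    · rintro ⟨b, hb⟩; exact ⟨Sum.inr b, hb⟩
    · rintro ⟨y, hy⟩
      cases y with
      | inl a' => exact absurd hy (by simp [vInM])
      | inr b => exact ⟨b, hy⟩
  | inr b =>
    constructor
    · rintro ⟨a, ha⟩; exact ⟨Sum.inl a, ha⟩
    · rintro ⟨y, hy⟩
      cases y with
      | inr b' => exact absurd hy (by simp [vInM])
      | inl a => exact ⟨a, hy⟩

end AuxDom

namespace AuxDom

open PrefSys

variable {A B : Type} {P : PrefSys A B}

lemma vInM_sdiff_intro {M N : Finset (A × B)} {x y : V A B}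
    (h1 : vInM M x y) (h2 : ¬ vInM N x y) : vInM (M \ N) x y := by
  cases x <;> cases y <;> simp_all [vInM]

noncomputable def mateF (M : Finset (A × B)) (x : V A B) : Option (V A B) :=
  if h : ∃ y, vInM M x y then some h.choose else none

lemma mateF_eq_some {M : Finset (A × B)} (hM : P.IsMatching M) {x y : V A B} :
    mateF M x = some y ↔ vInM M x y := by
  unfold mateF
  split_ifs with h
  · simp only [Option.some.injEq]
    constructor
    · rintro rfl; exact h.choose_spec
    · intro hy; exact vInM_unique hM h.choose_spec hy
  · simp only [(by simp : (none : Option (V A B)) ≠ some y), false_iff]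
    exact fun hy => h ⟨y, hy⟩

lemma mateF_eq_none {M : Finset (A × B)} {x : V A B} :
    mateF M x = none ↔ ∀ y, ¬ vInM M x y := by
  unfold mateF
  split_ifs with h
  · simp only [(by simp : some h.choose ≠ (none : Option (V A B))), false_iff]
    push_neg
    exact ⟨_, h.choose_spec⟩
  · push_neg at h; simpa using h

def typeAt (b : Bool) (i : ℕ) : Bool := if i % 2 = 0 then b else !b

lemma typeAt_zero (b : Bool) : typeAt b 0 = b := by simp [typeAt]

lemma typeAt_succ (b : Bool) (i : ℕ) : typeAt b (i + 1) = typeAt (!b) i := by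
  rcases Nat.mod_two_eq_zero_or_one i with h | h <;>
    simp [typeAt, h, Nat.add_mod, Bool.not_not]

noncomputable def stepM (M M' : Finset (A × B)) (b : Bool) (x : V A B) : Option (V A B) :=
  if b then mateF M' x else mateF M x

noncomputable def go (M M' : Finset (A × B)) : ℕ → Bool → V A B → List (V A B)
  | 0, _, x => [x]
  | (f+1), b, x => x :: ((stepM M M' b x).elim [] (go M M' f (!b)))

lemma go_succ (M M' : Finset (A × B)) (f : ℕ) (b : Bool) (x : V A B) :
    go M M' (f+1) b x = x :: ((stepM M M' b x).elim [] (go M M' f (!b))) := rfl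

lemma go_length_pos (M M' : Finset (A × B)) (f : ℕ) (b : Bool) (x : V A B) :
    0 < (go M M' f b x).length := by
  cases f <;> simp [go]

lemma go_getElem_zero (M M' : Finset (A × B)) (f : ℕ) (b : Bool) (x : V A B) :
    (go M M' f b x)[0]'(go_length_pos M M' f b x) = x := by
  cases f <;> simp [go]

lemma go_step (M M' : Finset (A × B)) (f : ℕ) (b : Bool) (x : V A B) :
    ∀ i (h : i + 1 < (go M M' f b x).length),
      stepM M M' (typeAt b i) ((go M M' f b x)[i]'(by omega)) =
        some ((go M M' f b x)[i+1]'h) := by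
  induction f generalizing b x with
  | zero => intro i h; simp [go] at h
  | succ f ih =>
    intro i h
    rcases hs : stepM M M' b x with _ | y
    · simp only [go_succ, hs] at h ⊢
      simp at h
    · simp only [go_succ, hs] at h ⊢
      simp only [Option.elim_some] at h ⊢
      cases i with
      | zero =>
        simp only [List.getElem_cons_zero, List.getElem_cons_succ, typeAt_zero]
        rw [go_getElem_zero]
        exact hs
      | succ j =>
        simp only [List.getElem_cons_succ, typeAt_succ]
        exact ih (!b) y j (by simpa using h)

lemma go_end (M M' : Finset (A × B)) (f : ℕ) (b : Bool) (x : V A B)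
    (hlen : (go M M' f b x).length ≤ f) :
    stepM M M' (typeAt b ((go M M' f b x).length - 1))
      ((go M M' f b x)[(go M M' f b x).length - 1]'(by
        have := go_length_pos M M' f b x; omega)) = none := by
  induction f generalizing b x with
  | zero => exact absurd hlen (by have := go_length_pos M M' 0 b x; omega)
  | succ f ih =>
    rcases hs : stepM M M' b x with _ | y
    · simp only [go_succ, hs]
      simpa [typeAt_zero] using hs
    · simp only [go_succ, hs] at hlen ⊢
      simp only [Option.elim_some] at hlen ⊢
      have hL : 0 < (go M M' f (!b) y).length := go_length_pos M M' f (!b) y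
      have hlen' : (go M M' f (!b) y).length ≤ f := by
        simp only [List.length_cons] at hlen; omega
      have hthis := ih (!b) y hlen'
      set l := go M M' f (!b) y with hl
      obtain ⟨L, hLL⟩ : ∃ L, l.length = L + 1 := ⟨l.length - 1, by omega⟩
      have key : ∀ (l : List (V A B)) (h1 : 0 < l.length),
          stepM M M' (typeAt (!b) (l.length - 1)) (l[l.length - 1]'(by omega)) = none →
          stepM M M' (typeAt b ((x :: l).length - 1))
            ((x :: l)[(x :: l).length - 1]'(by simp)) = none := by
        intro l h1 h
        obtain ⟨L, hLL⟩ : ∃ L, l.length = L + 1 := ⟨l.length - 1, by omega⟩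
        simp only [hLL, Nat.add_sub_cancel] at h
        simp only [List.length_cons, hLL, Nat.add_sub_cancel]
        rw [typeAt_succ]
        rw [List.getElem_cons_succ]
        exact h
      exact key _ hL hthis

end AuxDom

namespace AuxDom

open PrefSys

variable {A B : Type} {P : PrefSys A B}

lemma nodup_getElem_inj {α : Type*} {l : List α} (h : l.Nodup) {i j : ℕ}
    (hi : i < l.length) (hj : j < l.length) (he : l[i] = l[j]) : i = j := by
  have := List.nodup_iff_injective_get.1 h (a₁ := ⟨i, hi⟩) (a₂ := ⟨j, hj⟩) (by simpa using he)
  simpa using this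

lemma vInM_isLeft {M : Finset (A × B)} {x y : V A B} (h : vInM M x y) :
    y.isLeft = !x.isLeft := by
  cases x <;> cases y <;> simp_all [vInM]

lemma walk_props [Fintype A] [Fintype B] {M M' : Finset (A × B)}
    (hMm : P.IsMatching M) (hM'm : P.IsMatching M')
    {u y0 : V A B} (hu1 : ∀ y, ¬ vInM M u y) (hu2 : vInM M' u y0) :
    ∃ (w : List (V A B)) (hlen : 2 ≤ w.length),
      w.Nodup ∧ w[0]'(by omega) = u ∧
      (∀ i (h : i + 1 < w.length),
        vInM (if i % 2 = 0 then M' \ M else M \ M') (w[i]'(by omega)) (w[i+1]'h)) ∧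
      ((w.length - 1) % 2 = 0 → ∀ y, ¬ vInM M' (w[w.length - 1]'(by omega)) y) ∧
      ((w.length - 1) % 2 = 1 → ∀ y, ¬ vInM M (w[w.length - 1]'(by omega)) y) := by
  have : Nonempty (V A B) := ⟨u⟩
  set f := Fintype.card (V A B) with hfdef
  set w := go M M' f true u with hw
  have hpos : 0 < w.length := go_length_pos M M' f true u
  have h0 : w[0]'hpos = u := go_getElem_zero M M' f true u
  have hstep := go_step M M' f true u
  have hedge : ∀ i (h : i + 1 < w.length),
      vInM (if i % 2 = 0 then M' else M) (w[i]'(by omega)) (w[i+1]'h) := by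
    intro i h
    have hst := hstep i h
    by_cases hp : i % 2 = 0
    · rw [if_pos hp]
      have ht : typeAt true i = true := by simp [typeAt, hp]
      rw [ht] at hst
      exact (mateF_eq_some hM'm).1 (by simpa [stepM] using hst)
    · rw [if_neg hp]
      have ht : typeAt true i = false := by simp [typeAt, hp]
      rw [ht] at hst
      exact (mateF_eq_some hMm).1 (by simpa [stepM] using hst)
  have hside : ∀ i (h : i < w.length),
      (w[i]'h).isLeft = if i % 2 = 0 then u.isLeft else !u.isLeft := by
    intro i
    induction i with
    | zero => intro h; simp [h0]
    | succ j ihj =>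
      intro h
      have hj : j < w.length := by omega
      have he := hedge j (by omega)
      have hflip := vInM_isLeft (M := if j % 2 = 0 then M' else M) he
      rw [hflip, ihj hj]
      rcases Nat.mod_two_eq_zero_or_one j with hp | hp <;>
        simp [hp, Nat.add_mod, Bool.not_not]
  have hparity : ∀ i j (hi : i < w.length) (hj : j < w.length),
      w[i]'hi = w[j]'hj → i % 2 = j % 2 := by
    intro i j hi hj he
    have h1 := hside i hi
    have h2 := hside j hj
    rw [he] at h1
    rw [h1] at h2
    rcases Nat.mod_two_eq_zero_or_one i with hp | hp <;>
      rcases Nat.mod_two_eq_zero_or_one j with hq | hq <;>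
      simp [hp, hq] at h2 ⊢ <;> exact absurd h2 (by cases u <;> simp)
  have hne : ∀ i j (hij : i < j) (hj : j < w.length), w[i]'(by omega) ≠ w[j]'hj := by
    intro i
    induction i with
    | zero =>
      intro j hij hj he
      have hpar := hparity 0 j (by omega) hj he
      have hj2 : j % 2 = 0 := by simpa using hpar.symm
      have hjge : 2 ≤ j := by omega
      have hedgej := hedge (j-1) (by omega)
      have hpj : (j-1) % 2 = 1 := by omega
      rw [if_neg (by omega)] at hedgej
      have : vInM M (w[j]'hj) (w[j-1]'(by omega)) := by
        have := vInM_symm hedgej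
        simpa [show j - 1 + 1 = j by omega] using this
      rw [← he, h0] at this
      exact hu1 _ this
    | succ i ihi =>
      intro j hij hj he
      have hpar := hparity (i+1) j (by omega) hj he
      have hjpos : 1 ≤ j := by omega
      -- edges i and j-1 have the same parity type
      have hedgei := hedge i (by omega)
      have hedgej := hedge (j-1) (by omega)
      have hparedge : i % 2 = (j-1) % 2 := by omega
      -- mates of w[i+1] = w[j] in the same matching
      set X := if i % 2 = 0 then M' else M with hX
      have hXm : P.IsMatching X := by
        rw [hX]; split_ifs <;> assumption
      have h1 : vInM X (w[i+1]'(by omega)) (w[i]'(by omega)) := vInM_symm hedgei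
      have hXX : (if (j - 1) % 2 = 0 then M' else M) = X := by rw [hX, ← hparedge]
      have h2 : vInM X (w[j]'hj) (w[j-1]'(by omega)) := by
        have h3 := vInM_symm hedgej
        rw [hXX] at h3
        simpa [show j - 1 + 1 = j by omega] using h3
      rw [he] at h1
      have heq := vInM_unique hXm h1 h2
      exact ihi (j-1) (by omega) (by omega) heq
  have hgeinj : ∀ i j (hi : i < w.length) (hj : j < w.length),
      w[i]'hi = w[j]'hj → i = j := by
    intro i j hi hj he
    rcases lt_trichotomy i j with h | h | h
    · exact absurd he (hne i j h hj)
    · exact h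
    · exact absurd he.symm (hne j i h hi)
  have hnd : w.Nodup := by
    rw [List.nodup_iff_injective_get]
    rintro ⟨i, hi⟩ ⟨j, hj⟩ hij
    have := hgeinj i j hi hj (by simpa using hij)
    simp [this]
  have hlen2 : 2 ≤ w.length := by
    have hf1 : 1 ≤ f := Fintype.card_pos
    obtain ⟨f', hf'⟩ : ∃ f', f = f' + 1 := ⟨f - 1, by omega⟩
    have hstepdef : stepM M M' true u = mateF M' u := rfl
    have hsome : stepM M M' true u = some (Exists.choose (⟨y0, hu2⟩ : ∃ y, vInM M' u y)) := by
      rw [hstepdef, mateF, dif_pos (⟨y0, hu2⟩ : ∃ y, vInM M' u y)]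
    rw [hw, hf', go_succ, hsome]
    simp only [Option.elim_some, List.length_cons]
    have := go_length_pos M M' f' (!true) (Exists.choose (⟨y0, hu2⟩ : ∃ y, vInM M' u y))
    omega
  have hlenle : w.length ≤ f := by
    have := List.Nodup.length_le_card hnd
    omega
  have hend := go_end M M' f true u hlenle
  refine ⟨w, hlen2, hnd, h0, ?_, ?_, ?_⟩
  · intro i h
    have hmain := hedge i h
    by_cases hp : i % 2 = 0
    · rw [if_pos hp] at hmain ⊢
      refine vInM_sdiff_intro hmain ?_
      intro hmem
      rcases Nat.eq_zero_or_pos i with rfl | hipos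
      · rw [h0] at hmem
        exact hu1 _ hmem
      · have hige : 2 ≤ i := by omega
        have hedgej := hedge (i-1) (by omega)
        rw [if_neg (by omega)] at hedgej
        have h2 : vInM M (w[i]'(by omega)) (w[i-1]'(by omega)) := by
          have := vInM_symm hedgej
          simpa [show i - 1 + 1 = i by omega] using this
        have := vInM_unique hMm hmem h2
        have := hgeinj (i+1) (i-1) h (by omega) this
        omega
    · rw [if_neg hp] at hmain ⊢
      refine vInM_sdiff_intro hmain ?_
      intro hmem
      have hipos : 1 ≤ i := by omega
      have hedgej := hedge (i-1) (by omega)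
      rw [if_pos (by omega)] at hedgej
      have h2 : vInM M' (w[i]'(by omega)) (w[i-1]'(by omega)) := by
        have := vInM_symm hedgej
        simpa [show i - 1 + 1 = i by omega] using this
      have := vInM_unique hM'm hmem h2
      have := hgeinj (i+1) (i-1) h (by omega) this
      omega
  · intro hp
    have ht : typeAt true (w.length - 1) = true := by simp [typeAt, hp]
    rw [ht] at hend
    exact mateF_eq_none.1 (by simpa [stepM] using hend)
  · intro hp
    have ht : typeAt true (w.length - 1) = false := by simp [typeAt, hp]
    rw [ht] at hend
    exact mateF_eq_none.1 (by simpa [stepM] using hend)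

end AuxDom

namespace AuxDom

open PrefSys

variable {A B : Type} {P : PrefSys A B}

lemma isMatching_subset {M N : Finset (A × B)} (hM : P.IsMatching M) (hNM : N ⊆ M) :
    P.IsMatching N :=
  ⟨fun p hp => hM.1 p (hNM hp),
   fun p hp q hq h => hM.2.1 p (hNM hp) q (hNM hq) h,
   fun p hp q hq h => hM.2.2 p (hNM hp) q (hNM hq) h⟩

lemma isMatching_sdiff {M N : Finset (A × B)} (hM : P.IsMatching M) :
    P.IsMatching (M \ N) :=
  isMatching_subset hM (Finset.sdiff_subset)

/-- the walk-edge alternation property. -/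
def WEdges (M M' : Finset (A × B)) (w : List (V A B)) : Prop :=
  ∀ i (h : i + 1 < w.length),
    vInM (if i % 2 = 0 then M' \ M else M \ M') (w[i]'(by omega)) (w[i+1]'h)

lemma rev_det_aux (hMm : P.IsMatching M) (hM'm : P.IsMatching M')
    {w w' : List (V A B)} (hw2 : 2 ≤ w.length) (hw'2 : 2 ≤ w'.length)
    (he : WEdges M M' w) (he' : WEdges M M' w')
    (hpar : w.length % 2 = 1) (hpar' : w'.length % 2 = 1)
    (hlast : w[w.length - 1]'(by omega) = w'[w'.length - 1]'(by omega)) :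
    ∀ k, k ≤ w.length - 1 → k ≤ w'.length - 1 →
      w[w.length - 1 - k]'(by omega) = w'[w'.length - 1 - k]'(by omega) := by
  intro k
  induction k with
  | zero => intro _ _; simpa using hlast
  | succ k ihk =>
    intro hk hk'
    have hk0 := ihk (by omega) (by omega)
    set n := w.length - 1 with hn
    set m := w'.length - 1 with hm
    have hei := he (n - k - 1) (by omega)
    have hej := he' (m - k - 1) (by omega)
    have hpareq : (n - k - 1) % 2 = (m - k - 1) % 2 := by omega
    set X := if (n - k - 1) % 2 = 0 then M' \ M else M \ M' with hX
    have hXm : P.IsMatching X := by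
      rw [hX]; split_ifs
      · exact isMatching_sdiff hM'm
      · exact isMatching_sdiff hMm
    have hXX : (if (m - k - 1) % 2 = 0 then M' \ M else M \ M') = X := by
      rw [hX, ← hpareq]
    have h1 : vInM X (w[n - k]'(by omega)) (w[n - k - 1]'(by omega)) := by
      have h3 := vInM_symm hei
      simpa [show n - k - 1 + 1 = n - k by omega] using h3
    have h2 : vInM X (w'[m - k]'(by omega)) (w'[m - k - 1]'(by omega)) := by
      have h3 := vInM_symm hej
      rw [hXX] at h3
      simpa [show m - k - 1 + 1 = m - k by omega] using h3
    rw [hk0] at h1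
    have := vInM_unique hXm h1 h2
    simpa [hn, hm, Nat.sub_sub, Nat.add_assoc] using this

lemma rev_det_head (hMm : P.IsMatching M) (hM'm : P.IsMatching M')
    {w w' : List (V A B)} (hw2 : 2 ≤ w.length) (hw'2 : 2 ≤ w'.length)
    (he : WEdges M M' w) (he' : WEdges M M' w')
    (hpar : w.length % 2 = 1) (hpar' : w'.length % 2 = 1)
    (hlast : w[w.length - 1]'(by omega) = w'[w'.length - 1]'(by omega))
    (hu : ∀ y, ¬ vInM M (w[0]'(by omega)) y) (hu' : ∀ y, ¬ vInM M (w'[0]'(by omega)) y) :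
    w[0]'(by omega) = w'[0]'(by omega) := by
  have key : ∀ (v v' : List (V A B)) (hv2 : 2 ≤ v.length) (hv'2 : 2 ≤ v'.length),
      WEdges M M' v → WEdges M M' v' → v.length % 2 = 1 → v'.length % 2 = 1 →
      v[v.length - 1]'(by omega) = v'[v'.length - 1]'(by omega) →
      (∀ y, ¬ vInM M (v[0]'(by omega)) y) →
      v.length ≤ v'.length → v[0]'(by omega) = v'[0]'(by omega) := by
    intro v v' hv2 hv'2 hev hev' hp hp' hl hum hle
    set n := v.length - 1 with hn
    set m := v'.length - 1 with hm
    have hnm : n ≤ m := by omega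
    have hk := rev_det_aux hMm hM'm hv2 hv'2 hev hev' hp hp' hl n (le_refl n) (by omega)
    have hk0 : v[0]'(by omega) = v'[m - n]'(by omega) := by
      simpa [show v.length - 1 - n = 0 by omega,
        show v'.length - 1 - n = m - n by omega] using hk
    by_cases heq : n = m
    · simpa [show m - n = 0 by omega] using hk0
    · exfalso
      have hlt : n < m := by omega
      have hmn2 : 2 ≤ m - n := by omega
      have hej := hev' (m - n - 1) (by omega)
      have hjodd : (m - n - 1) % 2 = 1 := by omega
      rw [if_neg (by omega)] at hej
      have h3 : vInM M (v'[m - n]'(by omega)) (v'[m - n - 1]'(by omega)) := by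
        have h4 := vInM_sdiff_left (vInM_symm hej)
        simpa [show m - n - 1 + 1 = m - n by omega] using h4
      rw [← hk0] at h3
      exact hum _ h3
  rcases le_total w.length w'.length with h | h
  · exact key w w' hw2 hw'2 he he' hpar hpar' hlast hu h
  · exact (key w' w hw'2 hw2 he' he hpar' hpar hlast.symm hu' h).symm

noncomputable def msetV (M : Finset (A × B)) : Finset (V A B) :=
  M.image (fun p => Sum.inl p.1) ∪ M.image (fun p => Sum.inr p.2)

lemma mem_msetV {M : Finset (A × B)} {x : V A B} :
    x ∈ msetV M ↔ ∃ y, vInM M x y := by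
  simp only [msetV, Finset.mem_union, Finset.mem_image]
  constructor
  · rintro (⟨p, hp, rfl⟩ | ⟨p, hp, rfl⟩)
    · exact ⟨Sum.inr p.2, hp⟩
    · exact ⟨Sum.inl p.1, hp⟩
  · rintro ⟨y, hy⟩
    rcases vInM_cases hy with ⟨a, b, hab, ⟨h1, h2⟩ | ⟨h1, h2⟩⟩ <;> subst h1
    · exact Or.inl ⟨(a, b), hab, rfl⟩
    · exact Or.inr ⟨(a, b), hab, rfl⟩

lemma card_msetV {M : Finset (A × B)} (hMm : P.IsMatching M) :
    (msetV M).card = 2 * M.card := by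
  unfold msetV
  rw [Finset.card_union_of_disjoint]
  · rw [Finset.card_image_of_injOn, Finset.card_image_of_injOn]
    · omega
    · intro p hp q hq hpq
      exact hMm.2.2 p hp q hq (by simpa using hpq)
    · intro p hp q hq hpq
      exact hMm.2.1 p hp q hq (by simpa using hpq)
  · rw [Finset.disjoint_left]
    intro x hx1 hx2
    rw [Finset.mem_image] at hx1 hx2
    obtain ⟨p, -, rfl⟩ := hx1
    obtain ⟨q, -, hq⟩ := hx2
    simp at hq

/-- an augmenting alternating walk for `M` towards `M'`. -/
def AugWalk (M M' : Finset (A × B)) (w : List (V A B)) : Prop :=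
  ∃ _ : 2 ≤ w.length, w.Nodup ∧ w.length % 2 = 0 ∧ WEdges M M' w ∧
    (∀ y, ¬ vInM M (w[0]'(by omega)) y) ∧
    (∀ y, ¬ vInM M (w[w.length - 1]'(by omega)) y)

lemma exists_augwalk [Fintype A] [Fintype B] {M M' : Finset (A × B)}
    (hMm : P.IsMatching M) (hM'm : P.IsMatching M')
    (hcard : M.card < M'.card) : ∃ w, AugWalk M M' w := by
  by_contra hno
  push_neg at hno
  -- every unmatched-in-M, matched-in-M' vertex leads to a "dead" walk
  have hgood : ∀ u ∈ msetV M' \ msetV M, ∃ z,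
      (∃ w, ∃ _ : 2 ≤ w.length, w.Nodup ∧ WEdges M M' w ∧ w.length % 2 = 1 ∧
        w[0]'(by omega) = u ∧ w[w.length - 1]'(by omega) = z ∧
        (∀ y, ¬ vInM M (w[0]'(by omega)) y)) ∧
      z ∈ msetV M \ msetV M' := by
    intro u hu
    rw [Finset.mem_sdiff, mem_msetV, mem_msetV] at hu
    obtain ⟨⟨y0, hy0⟩, humem⟩ := hu
    push_neg at humem
    obtain ⟨w, hlen, hnd, h0, hedges, hend0, hend1⟩ := walk_props hMm hM'm humem hy0
    rcases Nat.mod_two_eq_zero_or_one (w.length - 1) with hp | hp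
    · -- dead end
      refine ⟨w[w.length - 1]'(by omega), ⟨w, hlen, hnd, hedges, by omega, h0, rfl, ?_⟩, ?_⟩
      · rw [h0]; exact humem
      · rw [Finset.mem_sdiff, mem_msetV, mem_msetV]
        constructor
        · have hlast := hedges (w.length - 2) (by omega)
          rw [if_neg (by omega)] at hlast
          have h4 := vInM_sdiff_left (vInM_symm hlast)
          exact ⟨_, by simpa [show w.length - 2 + 1 = w.length - 1 by omega] using h4⟩
        · push_neg
          exact hend0 hp
    · -- augmenting: contradiction
      exfalso
      refine hno w ⟨hlen, hnd, by omega, hedges, ?_, ?_⟩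
      · rw [h0]; exact humem
      · exact hend1 hp
  -- build injective map
  set U := msetV M' \ msetV M with hU
  set W := msetV M \ msetV M' with hW
  classical
  have hinj : ∃ f : V A B → V A B, Set.InjOn f U ∧ ∀ u ∈ U, f u ∈ W := by
    choose z hz hzW using hgood
    refine ⟨fun u => if h : u ∈ U then z u h else u, ?_, ?_⟩
    · intro u hu u' hu' hf
      simp only [Finset.mem_coe] at hu hu'
      have hf' : (if h : u ∈ U then z u h else u) = (if h : u' ∈ U then z u' h else u') := hf
      rw [dif_pos hu, dif_pos hu'] at hf'
      have hf := hf' 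
      obtain ⟨w, hw2, hwnd, hwe, hwp, hw0, hwl, hwu⟩ := hz u hu
      obtain ⟨w', hw'2, hw'nd, hw'e, hw'p, hw'0, hw'l, hw'u⟩ := hz u' hu'
      have := rev_det_head hMm hM'm hw2 hw'2 hwe hw'e hwp hw'p
        (by rw [hwl, hw'l, hf]) hwu hw'u
      rw [hw0, hw'0] at this
      exact this
    · intro u hu
      show (if h : u ∈ U then z u h else u) ∈ W
      rw [dif_pos hu]
      exact hzW u hu
  obtain ⟨f, hfinj, hfmaps⟩ := hinj
  have hle : U.card ≤ W.card := Finset.card_le_card_of_injOn f hfmaps hfinj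
  have h1 : U.card + (msetV M' ∩ msetV M).card = (msetV M').card :=
    Finset.card_sdiff_add_card_inter _ _
  have h2 : W.card + (msetV M ∩ msetV M').card = (msetV M).card :=
    Finset.card_sdiff_add_card_inter _ _
  rw [Finset.inter_comm] at h2
  have h3 := card_msetV hMm
  have h4 := card_msetV hM'm
  omega

end AuxDom

namespace AuxDom

open PrefSys

variable {A B : Type} {P : PrefSys A B}

attribute [local instance] Classical.propDecidable

/-- `{x,y}` is a consecutive pair of the list `w`. -/
def wpairV (w : List (V A B)) (x y : V A B) : Prop :=
  ∃ j, ∃ h : j + 1 < w.length,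
    ((w[j]'(by omega) = x ∧ w[j+1]'h = y) ∨ (w[j]'(by omega) = y ∧ w[j+1]'h = x))

lemma wpairV_symm {w : List (V A B)} {x y : V A B} (h : wpairV w x y) : wpairV w y x := by
  obtain ⟨j, hj, hc⟩ := h
  exact ⟨j, hj, hc.symm⟩

lemma wpairV_mem_left {w : List (V A B)} {x y : V A B} (h : wpairV w x y) : x ∈ w := by
  obtain ⟨j, hj, ⟨h1, h2⟩ | ⟨h1, h2⟩⟩ := h
  · exact h1 ▸ List.getElem_mem _
  · exact h2 ▸ List.getElem_mem _

lemma wpairV_mem_right {w : List (V A B)} {x y : V A B} (h : wpairV w x y) : y ∈ w :=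
  wpairV_mem_left (wpairV_symm h)

def wPair (w : List (V A B)) (p : A × B) : Prop :=
  wpairV w (Sum.inl p.1) (Sum.inr p.2)

/-- switch `M` along the `M'`-edges of the walk `w`. -/
noncomputable def coreN (M M' : Finset (A × B)) (w : List (V A B)) : Finset (A × B) :=
  (@Finset.filter _ (wPair w) (fun p => Classical.propDecidable _) (M' \ M)) ∪
    (@Finset.filter _
      (fun p => (Sum.inl p.1 : V A B) ∉ w ∧ (Sum.inr p.2 : V A B) ∉ w)
      (fun p => Classical.propDecidable _) M)

/-- a (parity-free) alternating walk hypothesis package for `coreN`. -/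
def CoreWalk (M M' : Finset (A × B)) (w : List (V A B)) : Prop :=
  w.Nodup ∧ ∃ _ : 2 ≤ w.length,
  (∀ i (h : i + 1 < w.length),
      vInM (M' \ M) (w[i]'(by omega)) (w[i+1]'h) ∨ vInM (M \ M') (w[i]'(by omega)) (w[i+1]'h)) ∧
  (∀ i (h : i + 2 < w.length),
      ¬ vInM M (w[i]'(by omega)) (w[i+1]'(by omega)) →
        vInM M (w[i+1]'(by omega)) (w[i+2]'h)) ∧
  (¬ vInM M (w[0]'(by omega)) (w[1]'(by omega)) → ∀ z, ¬ vInM M (w[0]'(by omega)) z) ∧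
  (¬ vInM M (w[w.length-2]'(by omega)) (w[w.length-1]'(by omega)) →
      ∀ z, ¬ vInM M (w[w.length-1]'(by omega)) z)

/-- every `M`-edge at a walk vertex is a walk pair. -/
lemma coreWalk_M_edge {M M' : Finset (A × B)} {w : List (V A B)}
    (cw : CoreWalk M M' w) (hMm : P.IsMatching M) {i : ℕ} (hi : i < w.length)
    {z : V A B} (hz : vInM M (w[i]'hi) z) : wpairV w (w[i]'hi) z := by
  obtain ⟨hnd, hlen, hedges, halt, hA, hB⟩ := cw
  by_cases hprev : 1 ≤ i ∧ vInM M (w[i-1]'(by omega)) (w[i]'hi)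
  · obtain ⟨hi1, hprev⟩ := hprev
    have heq := vInM_unique hMm (vInM_symm hprev) hz
    refine ⟨i - 1, by omega, Or.inr ⟨?_, ?_⟩⟩
    · rw [← heq]
    · congr 1; omega
  · -- previous edge (if any) not in M
    have hnext : ∃ _ : i + 1 < w.length, vInM M (w[i]'hi) (w[i+1]'(by omega)) := by
      rcases Nat.eq_zero_or_pos i with rfl | hipos
      · by_cases h0 : vInM M (w[0]'(by omega)) (w[1]'(by omega))
        · exact ⟨by omega, h0⟩
        · exact absurd hz (hA h0 z)
      · have hprev' : ¬ vInM M (w[i-1]'(by omega)) (w[i]'hi) := by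
          intro hc; exact hprev ⟨hipos, hc⟩
        by_cases hiend : i + 1 < w.length
        · have := halt (i-1) (by omega)
          simp only [show i - 1 + 1 = i by omega] at this
          have h5 := this (by
            intro hc
            exact hprev' (by simpa [show i - 1 + 1 = i by omega] using hc))
          have h6 : vInM M (w[i]'hi) (w[i-1+2]'(by omega)) := h5
          exact ⟨hiend, by simpa [show i - 1 + 2 = i + 1 by omega] using h6⟩
        · -- i is the last index
          exfalso
          have hilast : i = w.length - 1 := by omega
          have hlastedge : ¬ vInM M (w[w.length-2]'(by omega)) (w[w.length-1]'(by omega)) := by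
            intro hc
            apply hprev'
            have h7 : i - 1 = w.length - 2 := by omega
            have h8 : (w[i-1]'(by omega) : V A B) = w[w.length-2]'(by omega) := by congr 1
            have h9 : (w[i]'hi : V A B) = w[w.length-1]'(by omega) := by congr 1
            rw [h8, h9]; exact hc
          have := hB hlastedge z
          apply this
          have h9 : (w[i]'hi : V A B) = w[w.length-1]'(by omega) := by congr 1
          rw [← h9]; exact hz
    obtain ⟨hiend, hnext⟩ := hnext
    have heq := vInM_unique hMm hnext hz
    exact ⟨i, hiend, Or.inl ⟨rfl, heq⟩⟩

lemma mem_coreN {M M' : Finset (A × B)} {w : List (V A B)} {p : A × B} :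
    p ∈ coreN M M' w ↔
      (p ∈ M' \ M ∧ wPair w p) ∨ (p ∈ M ∧ Sum.inl p.1 ∉ w ∧ Sum.inr p.2 ∉ w) := by
  unfold coreN
  simp only [Finset.mem_union, Finset.mem_filter]

lemma vInM_coreN {M M' : Finset (A × B)} {w : List (V A B)} {x y : V A B} :
    vInM (coreN M M' w) x y ↔
      (vInM (M' \ M) x y ∧ wpairV w x y) ∨ (vInM M x y ∧ x ∉ w ∧ y ∉ w) := by
  cases x with
  | inl a =>
    cases y with
    | inl a' => simp [vInM]
    | inr b =>
      show (a, b) ∈ coreN M M' w ↔ _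
      rw [mem_coreN]
      constructor
      · rintro (⟨h1, h2⟩ | ⟨h1, h2, h3⟩)
        · exact Or.inl ⟨h1, h2⟩
        · exact Or.inr ⟨h1, h2, h3⟩
      · rintro (⟨h1, h2⟩ | ⟨h1, h2, h3⟩)
        · exact Or.inl ⟨h1, h2⟩
        · exact Or.inr ⟨h1, h2, h3⟩
  | inr b =>
    cases y with
    | inr b' => simp [vInM]
    | inl a =>
      show (a, b) ∈ coreN M M' w ↔ _
      rw [mem_coreN]
      constructor
      · rintro (⟨h1, h2⟩ | ⟨h1, h2, h3⟩)
        · exact Or.inl ⟨h1, wpairV_symm h2⟩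
        · exact Or.inr ⟨h1, h3, h2⟩
      · rintro (⟨h1, h2⟩ | ⟨h1, h2, h3⟩)
        · exact Or.inl ⟨h1, wpairV_symm h2⟩
        · exact Or.inr ⟨h1, h3, h2⟩

lemma coreN_isMatching {M M' : Finset (A × B)} {w : List (V A B)}
    (hMm : P.IsMatching M) (hM'm : P.IsMatching M') :
    P.IsMatching (coreN M M' w) := by
  have hmem : ∀ p ∈ coreN M M' w,
      (p ∈ M' \ M ∧ wPair w p) ∨ (p ∈ M ∧ Sum.inl p.1 ∉ w ∧ Sum.inr p.2 ∉ w) :=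
    fun p hp => mem_coreN.1 hp
  refine ⟨?_, ?_, ?_⟩
  · intro p hp
    rcases hmem p hp with ⟨h1, -⟩ | ⟨h1, -⟩
    · exact hM'm.1 p (Finset.mem_sdiff.1 h1).1
    · exact hMm.1 p h1
  · intro p hp q hq hpq
    rcases hmem p hp with ⟨h1, h2⟩ | ⟨h1, h2, h3⟩ <;>
      rcases hmem q hq with ⟨h1', h2'⟩ | ⟨h1', h2', h3'⟩
    · exact hM'm.2.1 p (Finset.mem_sdiff.1 h1).1 q (Finset.mem_sdiff.1 h1').1 hpq
    · exact absurd (hpq ▸ wpairV_mem_left h2) h2'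
    · exact absurd (hpq ▸ wpairV_mem_left h2') (hpq ▸ h2)
    · exact hMm.2.1 p h1 q h1' hpq
  · intro p hp q hq hpq
    rcases hmem p hp with ⟨h1, h2⟩ | ⟨h1, h2, h3⟩ <;>
      rcases hmem q hq with ⟨h1', h2'⟩ | ⟨h1', h2', h3'⟩
    · exact hM'm.2.2 p (Finset.mem_sdiff.1 h1).1 q (Finset.mem_sdiff.1 h1').1 hpq
    · exact absurd (hpq ▸ wpairV_mem_right h2) h3'
    · exact absurd (hpq ▸ wpairV_mem_right h2') (hpq ▸ h3)
    · exact hMm.2.2 p h1 q h1' hpq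

/-- off the walk, `coreN` has the same partners as `M`. -/
lemma coreN_off_walk {M M' : Finset (A × B)} {w : List (V A B)}
    (cw : CoreWalk M M' w) (hMm : P.IsMatching M) {x : V A B} (hx : x ∉ w) :
    ∀ y, vInM (coreN M M' w) x y ↔ vInM M x y := by
  intro y
  rw [vInM_coreN]
  constructor
  · rintro (⟨h1, h2⟩ | ⟨h1, -⟩)
    · exact absurd (wpairV_mem_left h2) hx
    · exact h1
  · intro h1
    refine Or.inr ⟨h1, hx, ?_⟩
    intro hy
    obtain ⟨i, hi, hieq⟩ := List.mem_iff_getElem.1 hy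
    have := coreWalk_M_edge cw hMm hi (z := x) (by rw [hieq]; exact vInM_symm h1)
    rw [hieq] at this
    exact hx (wpairV_mem_right this)

/-- at a vertex covered by an `M'∖M` walk edge, `coreN` has exactly that partner,
and so does `M'`. -/
lemma coreN_S_covered {M M' : Finset (A × B)} {w : List (V A B)}
    (hM'm : P.IsMatching M') {x z : V A B}
    (hvz : vInM (M' \ M) x z) (hwp : wpairV w x z) :
    ∀ y, (vInM (coreN M M' w) x y ↔ vInM M' x y) := by
  intro y
  have hxz' : vInM M' x z := vInM_sdiff_left hvz
  constructor
  · intro h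
    rcases vInM_coreN.1 h with ⟨h1, -⟩ | ⟨-, h2, -⟩
    · exact vInM_sdiff_left h1
    · exact absurd (wpairV_mem_left hwp) h2
  · intro h
    have : y = z := vInM_unique hM'm h hxz'
    subst this
    exact vInM_coreN.2 (Or.inl ⟨hvz, hwp⟩)

/-- a walk vertex with no incident `M'∖M` walk edge is unmatched in `coreN`. -/
lemma coreN_uncovered {M M' : Finset (A × B)} {w : List (V A B)}
    {x : V A B} (hx : x ∈ w)
    (hnoS : ∀ y, ¬ (vInM (M' \ M) x y ∧ wpairV w x y)) :
    ∀ y, ¬ vInM (coreN M M' w) x y := by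
  intro y h
  rcases vInM_coreN.1 h with ⟨h1, h2⟩ | ⟨-, h2, -⟩
  · exact hnoS y ⟨h1, h2⟩
  · exact h2 hx

end AuxDom

namespace AuxDom

open PrefSys

variable {A B : Type} {P : PrefSys A B}

lemma list_sum_getD {α : Type*} (l : List α) (g : α → ℤ) (d : α) :
    (l.map g).sum = ∑ i ∈ Finset.range l.length, g (l.getD i d) := by
  induction l with
  | nil => simp
  | cons a t ih =>
    rw [List.map_cons, List.sum_cons, List.length_cons, Finset.sum_range_succ']
    simp only [List.getD_cons_succ, List.getD_cons_zero]
    rw [← ih]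
    ring

lemma sum_univ_eq_list [Fintype A] [Fintype B] (g : V A B → ℤ) (w : List (V A B))
    (hnd : w.Nodup) (d : V A B) (hzero : ∀ v, v ∉ w → g v = 0) :
    ∑ v : V A B, g v = ∑ i ∈ Finset.range w.length, g (w.getD i d) := by
  have h1 : ∑ v ∈ w.toFinset, g v = ∑ v : V A B, g v := by
    apply Finset.sum_subset (Finset.subset_univ _)
    intro x _ hx
    exact hzero x (by simpa using hx)
  rw [← h1, List.sum_toFinset _ hnd, list_sum_getD]

lemma sum_toFinset_eq_list (g : V A B → ℤ) (w : List (V A B))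
    (hnd : w.Nodup) (d : V A B) :
    ∑ v ∈ w.toFinset, g v = ∑ i ∈ Finset.range w.length, g (w.getD i d) := by
  rw [List.sum_toFinset _ hnd, list_sum_getD]

lemma getD_eq_getElem' {α : Type*} (l : List α) (d : α) {i : ℕ} (h : i < l.length) :
    l.getD i d = l[i]'h := by
  rw [List.getD_eq_getElem?_getD, List.getElem?_eq_getElem h]
  rfl

lemma WEdges_take {M M' : Finset (A × B)} {w : List (V A B)}
    (hwe : WEdges M M' w) (k : ℕ) : WEdges M M' (w.take k) := by
  intro i h
  have hlt : i + 1 < w.length := by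
    have hh : (w.take k).length = min k w.length := List.length_take
    omega
  have := hwe i hlt
  have e1 : (w.take k)[i]'(by omega) = w[i]'(by omega) := List.getElem_take
  have e2 : (w.take k)[i+1]'h = w[i+1]'(by omega) := List.getElem_take
  rw [e1, e2]
  exact this

lemma WEdges_reverse {M M' : Finset (A × B)} {w : List (V A B)}
    (hwe : WEdges M M' w) (hpar : w.length % 2 = 0) : WEdges M M' w.reverse := by
  intro i h
  rw [List.length_reverse] at h
  have e1 : (w.reverse)[i]'(by rw [List.length_reverse]; omega)
      = w[w.length - 1 - i]'(by omega) := List.getElem_reverse _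
  have e2 : (w.reverse)[i+1]'(by rw [List.length_reverse]; omega)
      = w[w.length - 1 - (i+1)]'(by omega) := List.getElem_reverse _
  rw [e1, e2]
  have hj : w.length - 1 - (i + 1) + 1 = w.length - 1 - i := by omega
  have := hwe (w.length - 1 - (i+1)) (by omega)
  have hpareq : (w.length - 1 - (i+1)) % 2 = i % 2 := by omega
  have h2 := vInM_symm this
  rw [hpareq] at h2
  simp only [hj] at h2
  exact h2

lemma coreWalk_of_WEdges {M M' : Finset (A × B)} {w : List (V A B)}
    (hnd : w.Nodup) (hl2 : 2 ≤ w.length) (hwe : WEdges M M' w)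
    (hhead : ∀ z, ¬ vInM M (w[0]'(by omega)) z)
    (hlast : w.length % 2 = 0 → ∀ z, ¬ vInM M (w[w.length - 1]'(by omega)) z) :
    CoreWalk M M' w := by
  refine ⟨hnd, hl2, ?_, ?_, fun _ => hhead, ?_⟩
  · intro i h
    have := hwe i h
    by_cases hp : i % 2 = 0
    · rw [if_pos hp] at this; exact Or.inl this
    · rw [if_neg hp] at this; exact Or.inr this
  · intro i h hnm
    have h1 := hwe i (by omega)
    have hp : i % 2 = 0 := by
      by_contra hp
      rw [if_neg hp] at h1
      exact hnm (vInM_sdiff_left h1)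
    have h2 := hwe (i+1) h
    rw [if_neg (by omega)] at h2
    exact vInM_sdiff_left h2
  · intro hnm
    have h1 := hwe (w.length - 2) (by omega)
    have hidx : w.length - 2 + 1 = w.length - 1 := by omega
    by_cases hp : (w.length - 2) % 2 = 0
    · exact hlast (by omega)
    · rw [if_neg hp] at h1
      exfalso
      apply hnm
      have := vInM_sdiff_left h1
      simpa [hidx] using this
  
lemma coreWalk_swap_of_WEdges {M M' : Finset (A × B)} {w : List (V A B)}
    (hnd : w.Nodup) (hl2 : 2 ≤ w.length) (hwe : WEdges M M' w)
    (hpar : w.length % 2 = 0) : CoreWalk M' M w := by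
  refine ⟨hnd, hl2, ?_, ?_, ?_, ?_⟩
  · intro i h
    have := hwe i h
    by_cases hp : i % 2 = 0
    · rw [if_pos hp] at this; exact Or.inr this
    · rw [if_neg hp] at this; exact Or.inl this
  · intro i h hnm
    have h1 := hwe i (by omega)
    have hp : i % 2 = 1 := by
      by_contra hp
      rw [if_pos (by omega)] at h1
      exact hnm (vInM_sdiff_left h1)
    have h2 := hwe (i+1) h
    rw [if_pos (by omega)] at h2
    exact vInM_sdiff_left h2
  · intro hnm
    exfalso
    have h1 := hwe 0 (by omega)
    rw [if_pos rfl] at h1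
    exact hnm (vInM_sdiff_left h1)
  · intro hnm
    exfalso
    have h1 := hwe (w.length - 2) (by omega)
    rw [if_pos (by omega)] at h1
    apply hnm
    have := vInM_sdiff_left h1
    simpa [show w.length - 2 + 1 = w.length - 1 by omega] using this

lemma wedges_S_cover {M M' : Finset (A × B)} {w : List (V A B)}
    (hwe : WEdges M M' w) {i : ℕ} (h : i < w.length)
    (hside : i % 2 = 1 ∨ i + 1 < w.length) :
    ∃ z, vInM (M' \ M) (w[i]'h) z ∧ wpairV w (w[i]'h) z := by
  by_cases hp : i % 2 = 0
  · have hi1 : i + 1 < w.length := by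
      rcases hside with h1 | h1
      · omega
      · exact h1
    have := hwe i hi1
    rw [if_pos hp] at this
    exact ⟨w[i+1]'hi1, this, ⟨i, hi1, Or.inl ⟨rfl, rfl⟩⟩⟩
  · have hi1 : 1 ≤ i := by omega
    have := hwe (i-1) (by omega)
    rw [if_pos (by omega)] at this
    have h2 : vInM (M' \ M) (w[i]'h) (w[i-1]'(by omega)) := by
      have h3 := vInM_symm this
      simpa [show i - 1 + 1 = i by omega] using h3
    refine ⟨w[i-1]'(by omega), h2, ⟨i-1, by omega, Or.inr ⟨rfl, ?_⟩⟩⟩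
    congr 1
    omega

lemma wedges_M_cover_interior {M M' : Finset (A × B)} {w : List (V A B)}
    (hwe : WEdges M M' w) {i : ℕ} (h : i < w.length)
    (h1 : 1 ≤ i) (h2 : i + 1 < w.length ∨ i % 2 = 0) :
    ∃ z, vInM (M \ M') (w[i]'h) z ∧ wpairV w (w[i]'h) z := by
  by_cases hp : i % 2 = 1
  · have hi1 : i + 1 < w.length := by
      rcases h2 with h3 | h3
      · exact h3
      · omega
    have := hwe i hi1
    rw [if_neg (by omega)] at this
    exact ⟨w[i+1]'hi1, this, ⟨i, hi1, Or.inl ⟨rfl, rfl⟩⟩⟩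
  · have := hwe (i-1) (by omega)
    rw [if_neg (by omega)] at this
    have h3 : vInM (M \ M') (w[i]'h) (w[i-1]'(by omega)) := by
      have h4 := vInM_symm this
      simpa [show i - 1 + 1 = i by omega] using h4
    refine ⟨w[i-1]'(by omega), h3, ⟨i-1, by omega, Or.inr ⟨rfl, ?_⟩⟩⟩
    congr 1
    omega

lemma wedges_no_S_at_last_odd {M M' : Finset (A × B)} {w : List (V A B)}
    (hnd : w.Nodup) (hl2 : 2 ≤ w.length) (hwe : WEdges M M' w)
    (hpar : w.length % 2 = 1) :
    ∀ y, ¬ (vInM (M' \ M) (w[w.length - 1]'(by omega)) y ∧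
      wpairV w (w[w.length - 1]'(by omega)) y) := by
  rintro y ⟨hS, j, hj, hc⟩
  rcases hc with ⟨hc1, hc2⟩ | ⟨hc1, hc2⟩
  · have : j = w.length - 1 := nodup_getElem_inj hnd _ _ hc1
    omega
  · have : j + 1 = w.length - 1 := nodup_getElem_inj hnd _ _ hc2
    have hjodd : j % 2 = 1 := by omega
    have hedge := hwe j hj
    rw [if_neg (by omega)] at hedge
    have hS2 : vInM (M' \ M) (w[j]'(by omega)) (w[j+1]'hj) := by
      have := vInM_symm hS
      rw [← hc1, ← hc2] at this
      exact this
    exact vInM_sdiff_right hS2 (vInM_sdiff_left hedge)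

lemma wedges_no_M_at_ends_even {M M' : Finset (A × B)} {w : List (V A B)}
    (hnd : w.Nodup) (hl2 : 2 ≤ w.length) (hwe : WEdges M M' w)
    (hpar : w.length % 2 = 0) :
    (∀ y, ¬ (vInM (M \ M') (w[0]'(by omega)) y ∧ wpairV w (w[0]'(by omega)) y)) ∧
    (∀ y, ¬ (vInM (M \ M') (w[w.length - 1]'(by omega)) y ∧
      wpairV w (w[w.length - 1]'(by omega)) y)) := by
  constructor
  · rintro y ⟨hS, j, hj, hc⟩
    rcases hc with ⟨hc1, hc2⟩ | ⟨hc1, hc2⟩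
    · have h0 : j = 0 := nodup_getElem_inj hnd _ _ hc1
      subst h0
      have hedge := hwe 0 hj
      rw [if_pos rfl] at hedge
      subst hc2
      have hS2 : vInM (M \ M') (w[0]'(by omega)) (w[1]'hj) := hS
      exact vInM_sdiff_right hedge (vInM_sdiff_left hS2)
    · have : j + 1 = 0 := nodup_getElem_inj hnd _ _ hc2
      omega
  · rintro y ⟨hS, j, hj, hc⟩
    rcases hc with ⟨hc1, hc2⟩ | ⟨hc1, hc2⟩
    · have : j = w.length - 1 := nodup_getElem_inj hnd _ _ hc1
      omega
    · have hj1 : j + 1 = w.length - 1 := nodup_getElem_inj hnd _ _ hc2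
      have hjeven : j % 2 = 0 := by omega
      have hedge := hwe j hj
      rw [if_pos hjeven] at hedge
      have hS2 : vInM (M \ M') (w[j]'(by omega)) (w[j+1]'hj) := by
        have := vInM_symm hS
        rw [← hc1, ← hc2] at this
        exact this
      exact vInM_sdiff_right hedge (vInM_sdiff_left hS2)

end AuxDom

namespace AuxDom

open PrefSys

variable {A B : Type} {P : PrefSys A B}

attribute [local instance] Classical.propDecidable

lemma core_full_sum [Fintype A] [Fintype B] {M M' : Finset (A × B)}
    (hMm : P.IsMatching M) (hM'm : P.IsMatching M') {w : List (V A B)}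
    (hnd : w.Nodup) (hl2 : 2 ≤ w.length) (hpar : w.length % 2 = 0)
    (hwe : WEdges M M' w)
    (h0 : ∀ z, ¬ vInM M (w[0]'(by omega)) z)
    (hn : ∀ z, ¬ vInM M (w[w.length - 1]'(by omega)) z) (d : V A B) :
    ∑ v : V A B, vote P (coreN M M' w) M v =
      ∑ i ∈ Finset.range w.length, vote P M' M (w.getD i d) := by
  have cw := coreWalk_of_WEdges hnd hl2 hwe h0 (fun _ => hn)
  rw [sum_univ_eq_list _ w hnd d
    (fun v hv => vote_zero_of_same (coreN_off_walk cw hMm hv))]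
  apply Finset.sum_congr rfl
  intro i hi
  rw [Finset.mem_range] at hi
  rw [getD_eq_getElem' w d hi]
  obtain ⟨z, hz, hwp⟩ := wedges_S_cover hwe hi (by omega)
  exact vote_congr (coreN_S_covered hM'm hz hwp)

lemma core_prefix_sum [Fintype A] [Fintype B] {M M' : Finset (A × B)}
    (hMm : P.IsMatching M) (hM'm : P.IsMatching M') {w : List (V A B)}
    (hnd : w.Nodup) (hl2 : 2 ≤ w.length)
    (hwe : WEdges M M' w)
    (h0 : ∀ z, ¬ vInM M (w[0]'(by omega)) z) (d : V A B)
    {t : ℕ} (ht1 : 1 ≤ t) (ht2 : 2*t + 1 ≤ w.length - 1) :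
    ∑ v : V A B, vote P (coreN M M' (w.take (2*t+1))) M v =
      (∑ i ∈ Finset.range (2*t), vote P M' M (w.getD i d)) - 1 := by
  set wt := w.take (2*t+1) with hwt
  have hlt : wt.length = 2*t+1 := by
    rw [hwt, List.length_take]; omega
  have hndt : wt.Nodup := (List.take_sublist _ _).nodup hnd
  have hwet : WEdges M M' wt := WEdges_take hwe _
  have hl2t : 2 ≤ wt.length := by omega
  have hgt : ∀ i (h : i < 2*t+1), wt[i]'(by omega) = w[i]'(by omega) :=
    fun i h => List.getElem_take
  have h0t : ∀ z, ¬ vInM M (wt[0]'(by omega)) z := by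
    rw [hgt 0 (by omega)]; exact h0
  have cw := coreWalk_of_WEdges hndt hl2t hwet h0t (fun hev => by omega)
  rw [sum_univ_eq_list _ wt hndt d
    (fun v hv => vote_zero_of_same (coreN_off_walk cw hMm hv))]
  rw [hlt, Finset.sum_range_succ]
  have hlast : vote P (coreN M M' wt) M (wt.getD (2*t) d) = -1 := by
    rw [getD_eq_getElem' wt d (by omega)]
    have hnoS := wedges_no_S_at_last_odd hndt hl2t hwet (by omega)
    have hIdx : wt.length - 1 = 2*t := by omega
    have hnoS' : ∀ y, ¬ (vInM (M' \ M) (wt[2*t]'(by omega)) y ∧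
        wpairV wt (wt[2*t]'(by omega)) y) := by
      intro y
      have := hnoS y
      simpa [hIdx] using this
    have hum := coreN_uncovered (List.getElem_mem _) hnoS'
    -- wt[2t] is matched in M via the edge 2t-1
    have hedge := hwet (2*t-1) (by omega)
    rw [if_neg (by omega)] at hedge
    have hm : vInM M (wt[2*t]'(by omega)) (wt[2*t-1]'(by omega)) := by
      have h4 := vInM_sdiff_left (vInM_symm hedge)
      simpa [show 2*t - 1 + 1 = 2*t by omega] using h4
    exact vote_neg_one_unmatched hum hm
  rw [hlast]
  have hrest : ∀ i ∈ Finset.range (2*t),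
      vote P (coreN M M' wt) M (wt.getD i d) = vote P M' M (w.getD i d) := by
    intro i hi
    rw [Finset.mem_range] at hi
    rw [getD_eq_getElem' wt d (by omega), getD_eq_getElem' w d (by omega)]
    obtain ⟨z, hz, hwp⟩ := wedges_S_cover hwet (by omega : i < wt.length)
      (by rcases Nat.mod_two_eq_zero_or_one i with hp | hp
          · right; omega
          · left; exact hp)
    have := vote_congr (P := P) (M := M) (coreN_S_covered hM'm hz hwp)
    rw [this]
    have hge : (wt[i]'(by omega) : V A B) = w[i]'(by omega) := hgt i (by omega)
    rw [hge]
  rw [Finset.sum_congr rfl hrest]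
  ring

lemma core_swap_sum [Fintype A] [Fintype B] {M M' : Finset (A × B)}
    (hMm : P.IsMatching M) (hM'm : P.IsMatching M') {w : List (V A B)}
    (hnd : w.Nodup) (hl2 : 2 ≤ w.length) (hpar : w.length % 2 = 0)
    (hwe : WEdges M M' w)
    (h0 : ∀ z, ¬ vInM M (w[0]'(by omega)) z)
    (hn : ∀ z, ¬ vInM M (w[w.length - 1]'(by omega)) z) (d : V A B) :
    ∑ v : V A B, vote P (coreN M' M w) M v =
      (∑ v : V A B, vote P M' M v)
        - ∑ i ∈ Finset.range w.length, vote P M' M (w.getD i d) := by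
  have cw2 := coreWalk_swap_of_WEdges hnd hl2 hwe hpar
  have hends := wedges_no_M_at_ends_even hnd hl2 hwe hpar
  have honw : ∀ v, v ∈ w → vote P (coreN M' M w) M v = 0 := by
    intro v hv
    obtain ⟨i, hi, rfl⟩ := List.mem_iff_getElem.1 hv
    rcases Nat.eq_zero_or_pos i with rfl | hipos
    · have hum := coreN_uncovered (List.getElem_mem _) hends.1
      exact vote_zero_both_unmatched hum h0
    · by_cases hilast : i = w.length - 1
      · subst hilast
        have hum := coreN_uncovered (List.getElem_mem _) hends.2
        exact vote_zero_both_unmatched hum hn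
      · obtain ⟨z, hz, hwp⟩ := wedges_M_cover_interior hwe hi hipos (Or.inl (by omega))
        exact vote_zero_of_same (coreN_S_covered hMm hz hwp)
  have key : ∀ v, vote P M' M v =
      vote P (coreN M' M w) M v + (if v ∈ w.toFinset then vote P M' M v else 0) := by
    intro v
    rcases Classical.em (v ∈ w) with hv | hv
    · rw [honw v hv, if_pos (by simpa using hv)]
      ring
    · rw [if_neg (by simpa using hv)]
      have := vote_congr (P := P) (M := M) (coreN_off_walk cw2 hM'm hv)
      rw [this]
      ring
  calc ∑ v : V A B, vote P (coreN M' M w) M v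
      = (∑ v : V A B, vote P M' M v)
        - ∑ v : V A B, (if v ∈ w.toFinset then vote P M' M v else 0) := by
        rw [Finset.sum_congr rfl (fun v _ => key v)]
        rw [Finset.sum_add_distrib]
        ring
    _ = (∑ v : V A B, vote P M' M v)
        - ∑ i ∈ Finset.range w.length, vote P M' M (w.getD i d) := by
        congr 1
        rw [Finset.sum_ite_mem, Finset.univ_inter]
        exact sum_toFinset_eq_list _ w hnd d

end AuxDom

namespace AuxDom

open PrefSys

variable {A B : Type} {P : PrefSys A B}

lemma vAdjGM_of_M {M : Finset (A × B)} (hMm : P.IsMatching M) {x y : V A B}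
    (h : vInM M x y) : P.vAdjGM M x y := by
  rcases vInM_cases h with ⟨a, b, hab, ⟨h1, h2⟩ | ⟨h1, h2⟩⟩ <;> subst h1 <;> subst h2
  · exact ⟨hMm.1 _ hab, Or.inl hab⟩
  · exact ⟨hMm.1 _ hab, Or.inl hab⟩

lemma vAdjGM_of_plus {M M' : Finset (A × B)} (hM'm : P.IsMatching M')
    {x y : V A B} (h : vInM (M' \ M) x y)
    (hplus : vPlus P M x y ∨ vPlus P M y x) : P.vAdjGM M x y := by
  rcases vInM_cases h with ⟨a, b, hab, ⟨h1, h2⟩ | ⟨h1, h2⟩⟩ <;> subst h1 <;> subst h2 <;>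
    rw [Finset.mem_sdiff] at hab
  · have hadj : P.adj a b := hM'm.1 _ hab.1
    rcases hplus with hp | hp
    · exact ⟨hadj, Or.inr (Or.inl hp)⟩
    · exact ⟨hadj, Or.inr (Or.inr hp)⟩
  · have hadj : P.adj a b := hM'm.1 _ hab.1
    rcases hplus with hp | hp
    · exact ⟨hadj, Or.inr (Or.inr hp)⟩
    · exact ⟨hadj, Or.inr (Or.inl hp)⟩

theorem main_aux {A B : Type} [Fintype A] [Fintype B]
    (P : PrefSys A B) (M : Finset (A × B)) (hM : P.Popular M)
    (hnoaug : ¬ ∃ v, P.IsAugPath M v) :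
    P.Dominant M := by
  refine ⟨hM, ?_⟩
  intro M' hM'm hcard
  by_contra hlt
  push_neg at hlt
  have hMm := hM.1
  have hpopZ : ∀ N, P.IsMatching N → (∑ v : V A B, vote P N M v) ≤ 0 := by
    intro N hN
    have h1 := hM.2 N hN
    rw [← phi_sub]
    have h2 : (P.phi N M : ℤ) ≤ (P.phi M N : ℤ) := by exact_mod_cast h1
    linarith
  have hDge : 0 ≤ ∑ v : V A B, vote P M' M v := by
    rw [← phi_sub]
    have h2 : (P.phi M M' : ℤ) ≤ (P.phi M' M : ℤ) := by exact_mod_cast hlt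
    linarith
  obtain ⟨ρ, hl2, hnd, hpar, hwe, h0um, hnum⟩ := exists_augwalk hMm hM'm hcard
  set n := ρ.length with hn
  set d : V A B := ρ[0]'(by omega) with hd
  set F : ℕ → ℤ := fun k => ∑ i ∈ Finset.range k, vote P M' M (ρ.getD i d) with hF
  have hFs : ∀ k, F (k+1) = F k + vote P M' M (ρ.getD k d) :=
    fun k => Finset.sum_range_succ _ _
  -- (A) full switch
  have hfull : F n ≤ 0 := by
    have h1 := core_full_sum hMm hM'm hnd hl2 hpar hwe h0um hnum d
    have h2 := hpopZ _ (coreN_isMatching (w := ρ) hMm hM'm)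
    rw [h1] at h2
    exact h2
  -- (B) swap: remove the path from M'
  have hFn : F n = 0 := by
    have h1 := core_swap_sum hMm hM'm hnd hl2 hpar hwe h0um hnum d
    have h2 := hpopZ _ (coreN_isMatching (w := ρ) hM'm hMm)
    rw [h1] at h2
    have h3 : F n = ∑ i ∈ Finset.range ρ.length, vote P M' M (ρ.getD i d) := rfl
    rw [h3] at hfull ⊢
    omega
  -- (C) prefix bounds
  have hpre : ∀ t, 1 ≤ t → 2*t + 1 ≤ n - 1 → F (2*t) ≤ 1 := by
    intro t ht1 ht2
    have h1 := core_prefix_sum hMm hM'm hnd hl2 hwe h0um d ht1 ht2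
    have h2 := hpopZ _ (coreN_isMatching (w := ρ.take (2*t+1)) hMm hM'm)
    rw [h1] at h2
    have : F (2*t) = ∑ i ∈ Finset.range (2*t), vote P M' M (ρ.getD i d) := rfl
    omega
  -- (D) reversed walk and suffix bounds
  set ρ' : List (V A B) := ρ.reverse with hρ'
  have hnd' : ρ'.Nodup := List.nodup_reverse.2 hnd
  have hlen' : ρ'.length = n := by rw [hρ', List.length_reverse]
  have hl2' : 2 ≤ ρ'.length := by omega
  have hpar' : ρ'.length % 2 = 0 := by omega
  have hwe' : WEdges M M' ρ' := WEdges_reverse hwe hpar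
  have hrev : ∀ i (h : i < n), ρ'[i]'(by omega) = ρ[n - 1 - i]'(by omega) := by
    intro i h
    exact List.getElem_reverse _
  have h0um' : ∀ z, ¬ vInM M (ρ'[0]'(by omega)) z := by
    rw [hrev 0 (by omega)]
    simpa using hnum
  have hnum' : ∀ z, ¬ vInM M (ρ'[ρ'.length - 1]'(by omega)) z := by
    have h1 := hrev (n-1) (by omega)
    have h2 : ρ'.length - 1 = n - 1 := by omega
    simp only [h2, h1, show n - 1 - (n-1) = 0 by omega]
    exact h0um
  set F' : ℕ → ℤ := fun k => ∑ i ∈ Finset.range k, vote P M' M (ρ'.getD i d) with hF'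
  have hpre' : ∀ t, 1 ≤ t → 2*t + 1 ≤ n - 1 → F' (2*t) ≤ 1 := by
    intro t ht1 ht2
    have h1 := core_prefix_sum hMm hM'm hnd' hl2' hwe' h0um' d ht1 (by omega)
    have h2 := hpopZ _ (coreN_isMatching (w := ρ'.take (2*t+1)) hMm hM'm)
    rw [h1] at h2
    have : F' (2*t) = ∑ i ∈ Finset.range (2*t), vote P M' M (ρ'.getD i d) := rfl
    omega
  have hgd' : ∀ i, i < n → ρ'.getD i d = ρ.getD (n - 1 - i) d := by
    intro i h
    rw [getD_eq_getElem' ρ' d (by omega), getD_eq_getElem' ρ d (by omega)]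
    exact hrev i h
  have hrel : ∀ k, k ≤ n → F' k = F n - F (n - k) := by
    intro k
    induction k with
    | zero => intro _; simp [hF', hF]
    | succ k ih =>
      intro hk
      have h1 : F' (k+1) = F' k + vote P M' M (ρ'.getD k d) :=
        Finset.sum_range_succ _ _
      rw [h1, ih (by omega), hgd' k (by omega)]
      have h2 : n - k = (n - k - 1) + 1 := by omega
      have h3 : F (n - k) = F (n - k - 1) + vote P M' M (ρ.getD (n - k - 1) d) := by
        rw [h2]; exact hFs _
      have h4 : n - 1 - k = n - k - 1 := by omega
      rw [h4, show n - (k+1) = n - k - 1 by omega]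
      omega
  -- (E) every vote along the walk is ±1
  have hodd : ∀ i, i < n → vote P M' M (ρ.getD i d) = 1 ∨ vote P M' M (ρ.getD i d) = -1 := by
    intro i h
    rw [getD_eq_getElem' ρ d h]
    obtain ⟨z, hz, -⟩ := wedges_S_cover hwe h (by
      rcases Nat.mod_two_eq_zero_or_one i with hp | hp
      · right; omega
      · left; exact hp)
    exact vote_ne_zero hMm hM'm (vInM_sdiff_left hz) (vInM_sdiff_right hz)
  -- (F) even prefix sums are even
  have heven : ∀ t, 2*t ≤ n → F (2*t) % 2 = 0 := by
    intro t
    induction t with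
    | zero => intro _; simp [hF]
    | succ t ih =>
      intro ht
      have h1 : F (2*(t+1)) = F (2*t) + vote P M' M (ρ.getD (2*t) d)
          + vote P M' M (ρ.getD (2*t+1) d) := by
        rw [show 2*(t+1) = (2*t+1)+1 by omega, hFs, hFs]
      rcases hodd (2*t) (by omega) with h2 | h2 <;>
        rcases hodd (2*t+1) (by omega) with h3 | h3 <;>
        rw [h1, h2, h3] <;> omega
  -- (G) all even prefix sums vanish
  have hzero : ∀ t, 2*t ≤ n → F (2*t) = 0 := by
    intro t ht
    rcases Nat.eq_zero_or_pos t with rfl | ht1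
    · simp [hF]
    · by_cases htop : 2*t = n
      · rw [htop]; exact hFn
      · have ht2 : 2*t + 2 ≤ n := by omega
        have hub := hpre t ht1 (by omega)
        have hlb : F n - F (2*t) ≤ 1 := by
          have h2 := hpre' ((n - 2*t)/2) (by omega) (by omega)
          have h3 := hrel (n - 2*t) (by omega)
          rw [show 2*((n-2*t)/2) = n - 2*t by omega] at h2
          rw [show n - (n - 2*t) = 2*t by omega] at h3
          omega
        have hev := heven t ht
        omega
  -- (H) on each M'-edge of the walk, some endpoint votes +
  have hpair : ∀ k, 2*k+1 < n →
      vote P M' M (ρ.getD (2*k) d) = 1 ∨ vote P M' M (ρ.getD (2*k+1) d) = 1 := by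
    intro k hk
    have h1 : F (2*(k+1)) = F (2*k) + vote P M' M (ρ.getD (2*k) d)
        + vote P M' M (ρ.getD (2*k+1) d) := by
      rw [show 2*(k+1) = (2*k+1)+1 by omega, hFs, hFs]
    have h2 := hzero k (by omega)
    have h3 := hzero (k+1) (by omega)
    rcases hodd (2*k) (by omega) with h4 | h4 <;>
      rcases hodd (2*k+1) (by omega) with h5 | h5
    · exact Or.inl h4
    · exact Or.inl h4
    · exact Or.inr h5
    · exfalso; rw [h1, h4, h5] at h3; omega
  -- (I) the walk is an augmenting path in G_M : contradiction
  apply hnoaug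
  refine ⟨ρ, ⟨hnd, ?_, ?_⟩, by omega, ?_, ?_⟩
  · -- chain of G_M edges
    show List.IsChain _ _
    rw [List.isChain_iff_getElem]
    intro i hi
    have hi' : i + 1 < n := by omega
    have hedge := hwe i hi'
    by_cases hp : i % 2 = 0
    · rw [if_pos hp] at hedge
      have hk : 2 * (i/2) = i := by omega
      have hplus : vPlus P M (ρ[i]'(by omega)) (ρ[i+1]'(by omega)) ∨
          vPlus P M (ρ[i+1]'(by omega)) (ρ[i]'(by omega)) := by
        rcases hpair (i/2) (by omega) with h1 | h1 <;> rw [hk] at h1 <;>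
          rw [getD_eq_getElem' ρ d (by omega)] at h1
        · left
          exact (vote_one_iff_plus hM'm (vInM_sdiff_left hedge)).1 h1
        · right
          exact (vote_one_iff_plus hM'm (vInM_sdiff_left (vInM_symm hedge))).1 h1
      exact vAdjGM_of_plus hM'm hedge hplus
    · rw [if_neg hp] at hedge
      exact vAdjGM_of_M hMm (vInM_sdiff_left hedge)
  · -- alternation of edges
    have hMiff : ∀ j (h : j+1 < n), (vInM M (ρ[j]'(by omega)) (ρ[j+1]'h) ↔ j % 2 = 1) := by
      intro j h
      have hedge := hwe j h
      constructor
      · intro hmem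
        by_contra hp
        rw [if_pos (by omega)] at hedge
        exact vInM_sdiff_right hedge hmem
      · intro hp
        rw [if_neg (by omega)] at hedge
        exact vInM_sdiff_left hedge
    show List.IsChain _ _
    rw [List.isChain_iff_getElem]
    intro i hi
    have hlen : (edgesOf ρ).length = n - 1 := by
      simp only [edgesOf, List.length_zip, List.length_tail]
      omega
    rw [hlen] at hi
    have hget : ∀ j (h : j < n - 1),
        (edgesOf ρ)[j]'(by omega) = (ρ[j]'(by omega), ρ[j+1]'(by omega)) := by
      intro j h
      simp only [edgesOf, List.get_eq_getElem]
      rw [List.getElem_zip]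
      refine Prod.ext rfl ?_
      simp only
      apply List.getElem_tail
    rw [hget i (by omega), hget (i+1) (by omega)]
    simp only
    rw [hMiff i (by omega), hMiff (i+1) (by omega)]
    rcases Nat.mod_two_eq_zero_or_one i with hp | hp <;> simp [hp] <;> omega
  · intro x hx
    have : ρ.head? = some (ρ[0]'(by omega)) := by
      rw [List.head?_eq_getElem?, List.getElem?_eq_getElem (by omega)]
    rw [this] at hx
    have hx0 : x = ρ[0]'(by omega) := by simpa using hx.symm
    subst hx0
    rw [vMatched_iff]
    push_neg
    exact h0um
  · intro x hx
    have : ρ.getLast? = some (ρ[n-1]'(by omega)) := by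
      rw [List.getLast?_eq_getElem?, List.getElem?_eq_getElem (by omega)]
    rw [this] at hx
    have hx0 : x = ρ[n-1]'(by omega) := by simpa using hx.symm
    subst hx0
    rw [vMatched_iff]
    push_neg
    exact hnum

end AuxDom

open PrefSys in
/-- a popular matching with no augmenting path in `G_M` is
dominant: it is more popular than every matching of strictly larger size. -/
theorem no_aug_path_implies_dominant {A B : Type} [Fintype A] [Fintype B]
    (P : PrefSys A B) (M : Finset (A × B)) (hM : P.Popular M)
    (hnoaug : ¬ ∃ v, P.IsAugPath M v) :
    P.Dominant M := by
  exact AuxDom.main_aux P M hM hnoaug
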